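/- Let A be a positive-definite symmetric real d×d matrix, let f, g : ℝ^d → ℝ be continuous, and let δ : (0,∞) → (0,1] satisfy √ε / δ(ε) → 0 as ε → 0⁺. Then lim_{ε→0⁺} (2πε)^{-d/2} ∫_{B_{δ(ε)}} e^{-(x·Ax)/(2ε)} · g(x/δ(ε)) · f(x) dx = g(0)·f(0) / √(det A). -/

import Mathlib

open Filter Topology MeasureTheory Matrix
open scoped MatrixOrder Matrix.Norms.L2Operator

variable {d : ℕ}

noncomputable def quadE (A : Matrix (Fin d) (Fin d) ℝ) (x : EuclideanSpace ℝ (Fin d)) : ℝ :=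
  (WithLp.equiv 2 _ x) ⬝ᵥ A *ᵥ (WithLp.equiv 2 _ x)

lemma quadE_def' (A : Matrix (Fin d) (Fin d) ℝ) (x : EuclideanSpace ℝ (Fin d)) :
    quadE A x = ∑ i, x i * ∑ j, A i j * x j := rfl

lemma quadE_eq (A : Matrix (Fin d) (Fin d) ℝ) (x : EuclideanSpace ℝ (Fin d)) :
    (∑ i, ∑ j, x i * A i j * x j) = quadE A x := by
  rw [quadE_def']
  simp [Finset.mul_sum, mul_assoc]

lemma continuous_quadE (A : Matrix (Fin d) (Fin d) ℝ) : Continuous (quadE A) := by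
  have h : ∀ i, Continuous fun x : EuclideanSpace ℝ (Fin d) => x i :=
    fun i => (continuous_apply i).comp (PiLp.continuous_ofLp 2 _)
  have hq : quadE A = fun x => ∑ i, x i * ∑ j, A i j * x j := rfl
  rw [hq]
  exact continuous_finset_sum _ fun i _ =>
    ((h i).mul (continuous_finset_sum _ fun j _ => (continuous_const.mul (h j))))

lemma quadE_norm (A : Matrix (Fin d) (Fin d) ℝ) (hA : A.PosDef) (x : EuclideanSpace ℝ (Fin d)) :
    quadE A x = ‖Matrix.toEuclideanLin (CFC.sqrt A) x‖ ^ 2 := by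
  have hS : (CFC.sqrt A).PosSemidef := Matrix.nonneg_iff_posSemidef.mp (CFC.sqrt_nonneg A)
  have hsq : CFC.sqrt A * CFC.sqrt A = A := CFC.sqrt_mul_sqrt_self A hA.posSemidef.nonneg
  set S := CFC.sqrt A with hSdef
  have hsymm : Sᵀ = S := by
    have := hS.isHermitian
    rwa [Matrix.IsHermitian, Matrix.conjTranspose_eq_transpose_of_trivial] at this
  rw [EuclideanSpace.norm_eq, Real.sq_sqrt (by positivity)]
  have happ : ∀ i, (Matrix.toEuclideanLin S x) i = (S *ᵥ (WithLp.equiv 2 _ x)) i := by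
    intro i
    rw [Matrix.toEuclideanLin_apply]
    rfl
  simp only [Real.norm_eq_abs, sq_abs]
  simp_rw [happ]
  have : ∑ i, ((S *ᵥ (WithLp.equiv 2 _ x)) i) ^ 2
      = (S *ᵥ (WithLp.equiv 2 _ x)) ⬝ᵥ (S *ᵥ (WithLp.equiv 2 _ x)) := by
    simp [dotProduct, sq]
  rw [this, quadE, ← hsq, ← Matrix.mulVec_mulVec, Matrix.dotProduct_mulVec _ S,
    ← Matrix.mulVec_transpose, hsymm]

lemma gaussE_int (A : Matrix (Fin d) (Fin d) ℝ) (hA : A.PosDef) :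
    Integrable (fun x : EuclideanSpace ℝ (Fin d) => Real.exp (-(quadE A x) / 2)) ∧
    ∫ x : EuclideanSpace ℝ (Fin d), Real.exp (-(quadE A x) / 2)
      = (2 * Real.pi) ^ ((d : ℝ) / 2) / Real.sqrt A.det := by
  classical
  have hS : (CFC.sqrt A).PosSemidef := Matrix.nonneg_iff_posSemidef.mp (CFC.sqrt_nonneg A)
  have hsq : CFC.sqrt A * CFC.sqrt A = A := CFC.sqrt_mul_sqrt_self A hA.posSemidef.nonneg
  set S := CFC.sqrt A with hSdef
  -- determinant facts
  have hdetA : 0 < A.det := hA.det_pos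
  have hdetS : S.det = Real.sqrt A.det := by
    have h1 : S.det * S.det = A.det := by rw [← Matrix.det_mul, hsq]
    have h2 : 0 ≤ S.det := by
      rw [hS.isHermitian.det_eq_prod_eigenvalues]
      exact Finset.prod_nonneg fun i _ => hS.eigenvalues_nonneg i
    rw [← h1, Real.sqrt_mul_self h2]
  have hdetS_pos : 0 < S.det := by rw [hdetS]; positivity
  -- the linear map
  set L : EuclideanSpace ℝ (Fin d) →ₗ[ℝ] EuclideanSpace ℝ (Fin d) := Matrix.toEuclideanLin S
    with hL
  have hdetL : LinearMap.det L = S.det := by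
    rw [hL, Matrix.toEuclideanLin_eq_toLin, LinearMap.det_toLin]
  have hdetL0 : LinearMap.det L ≠ 0 := by rw [hdetL]; exact hdetS_pos.ne'
  -- the Gaussian on the Euclidean space
  set G : EuclideanSpace ℝ (Fin d) → ℝ := fun v => Real.exp (-(1/2 : ℝ) * ‖v‖ ^ 2) with hG
  have hGcont : Continuous G := by fun_prop
  have hGint : Integrable G := by
    have := (GaussianFourier.integrable_cexp_neg_mul_sq_norm_add
      (V := EuclideanSpace ℝ (Fin d)) (b := (1/2 : ℂ)) (by norm_num) 0 0).norm
    refine this.congr (Eventually.of_forall fun v => ?_)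
    simp only [hG]
    rw [Complex.norm_exp]
    norm_num
    norm_cast
  have hGval : ∫ v : EuclideanSpace ℝ (Fin d), G v = (2 * Real.pi) ^ ((d : ℝ) / 2) := by
    have := GaussianFourier.integral_rexp_neg_mul_sq_norm
      (V := EuclideanSpace ℝ (Fin d)) (b := (1/2 : ℝ)) (by norm_num)
    rw [hG]
    simp only [neg_mul] at this ⊢
    rw [this, finrank_euclideanSpace_fin]
    have h2 : Real.pi / (1/2) = 2 * Real.pi := by ring
    rw [h2]
  -- quadE as G ∘ L
  have hQL : ∀ x, Real.exp (-(quadE A x) / 2) = G (L x) := by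
    intro x
    rw [quadE_norm A hA x, hG]
    ring_nf
    rfl
  -- measure map
  have hmap : Measure.map (fun x => L x) volume
      = ENNReal.ofReal |(S.det)⁻¹| • volume := by
    rw [← hdetL]
    exact Measure.map_linearMap_addHaar_eq_smul_addHaar volume hdetL0
  -- as measurable equiv
  let e : EuclideanSpace ℝ (Fin d) ≃ₗ[ℝ] EuclideanSpace ℝ (Fin d) :=
    LinearMap.equivOfDetNeZero L hdetL0
  let m : EuclideanSpace ℝ (Fin d) ≃ᵐ EuclideanSpace ℝ (Fin d) :=
    e.toContinuousLinearEquiv.toHomeomorph.toMeasurableEquiv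
  have hme : ∀ x, m x = L x := fun _ => rfl
  have hmapm : Measure.map m volume = ENNReal.ofReal |(S.det)⁻¹| • volume := by
    rw [← hmap]
    congr 1
  constructor
  · have h2 : Integrable G (Measure.map m volume) := by
      rw [hmapm]
      exact hGint.smul_measure (by simp)
    have h1 : Integrable (fun x => G (m x)) := (integrable_map_equiv m G).mp h2
    refine h1.congr (Eventually.of_forall fun x => ?_)
    show G (m x) = Real.exp (-quadE A x / 2)
    rw [hme x, ← hQL x]
  · calc ∫ x : EuclideanSpace ℝ (Fin d), Real.exp (-(quadE A x) / 2)
        = ∫ x, G (m x) := by simp_rw [hQL]; rfl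
      _ = ∫ y, G y ∂(Measure.map m volume) := (integral_map_equiv m G).symm
      _ = |(S.det)⁻¹| * ∫ y, G y := by
          rw [hmapm, integral_smul_measure, ENNReal.toReal_ofReal (abs_nonneg _), smul_eq_mul]
      _ = (2 * Real.pi) ^ ((d : ℝ) / 2) / Real.sqrt A.det := by
          rw [hGval, abs_of_pos (by positivity), hdetS]
          rw [inv_mul_eq_div]

lemma quadE_smul (A : Matrix (Fin d) (Fin d) ℝ) (c : ℝ) (y : EuclideanSpace ℝ (Fin d)) :
    quadE A (c • y) = c ^ 2 * quadE A y := by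
  simp only [quadE_def', PiLp.smul_apply, smul_eq_mul, Finset.mul_sum]
  refine Finset.sum_congr rfl fun i _ => Finset.sum_congr rfl fun j _ => by ring

theorem stmt2 {d : ℕ}
    (A : Matrix (Fin d) (Fin d) ℝ) (hA : A.PosDef)
    (f g : EuclideanSpace ℝ (Fin d) → ℝ) (hf : Continuous f) (hg : Continuous g)
    (δ : ℝ → ℝ) (hδ : ∀ ε : ℝ, 0 < ε → δ ε ∈ Set.Ioc (0:ℝ) 1)
    (hlim : Tendsto (fun ε => Real.sqrt ε / δ ε) (𝓝[>] (0:ℝ)) (𝓝 0)) :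
    Tendsto (fun ε =>
        (2 * Real.pi * ε) ^ (-(d : ℝ) / 2) *
          ∫ x in Metric.closedBall (0 : EuclideanSpace ℝ (Fin d)) (δ ε),
            Real.exp (-(∑ i, ∑ j, x i * A i j * x j) / (2 * ε)) *
              g ((δ ε)⁻¹ • x) * f x)
      (𝓝[>] (0:ℝ)) (𝓝 (g 0 * f 0 / Real.sqrt A.det)) := by
  have hπ : (0:ℝ) < 2 * Real.pi := by positivity
  set l := 𝓝[>] (0:ℝ)
  set inn : ℝ → EuclideanSpace ℝ (Fin d) → ℝ := fun ε y =>
    Real.exp (-(quadE A y) / 2) * g ((Real.sqrt ε / δ ε) • y) * f (Real.sqrt ε • y) with hinn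
  set F : ℝ → EuclideanSpace ℝ (Fin d) → ℝ := fun ε =>
    (Metric.closedBall (0 : EuclideanSpace ℝ (Fin d)) (δ ε / Real.sqrt ε)).indicator (inn ε)
    with hF
  -- Step 1 : eventual equality
  have hEq : ∀ᶠ ε in l, (2 * Real.pi * ε) ^ (-(d : ℝ) / 2) *
          ∫ x in Metric.closedBall (0 : EuclideanSpace ℝ (Fin d)) (δ ε),
            Real.exp (-(∑ i, ∑ j, x i * A i j * x j) / (2 * ε)) *
              g ((δ ε)⁻¹ • x) * f x
        = (2 * Real.pi) ^ (-(d : ℝ) / 2) * ∫ y, F ε y := by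
    filter_upwards [self_mem_nhdsWithin] with ε hε
    rw [Set.mem_Ioi] at hε
    obtain ⟨hδ0, hδ1⟩ := hδ ε hε
    have hs : 0 < Real.sqrt ε := Real.sqrt_pos.mpr hε
    have hss : Real.sqrt ε * Real.sqrt ε = ε := Real.mul_self_sqrt hε.le
    -- rewrite the quadratic form
    have hq : ∀ x : EuclideanSpace ℝ (Fin d),
        Real.exp (-(∑ i, ∑ j, x i * A i j * x j) / (2 * ε)) * g ((δ ε)⁻¹ • x) * f x
        = Real.exp (-(quadE A x) / (2 * ε)) * g ((δ ε)⁻¹ • x) * f x := by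
      intro x; rw [quadE_eq]
    rw [MeasureTheory.setIntegral_congr_fun measurableSet_closedBall
      (fun x _ => hq x)]
    set Φ : EuclideanSpace ℝ (Fin d) → ℝ := fun x =>
      Real.exp (-(quadE A x) / (2 * ε)) * g ((δ ε)⁻¹ • x) * f x with hΦ
    set H : EuclideanSpace ℝ (Fin d) → ℝ :=
      (Metric.closedBall (0 : EuclideanSpace ℝ (Fin d)) (δ ε)).indicator Φ with hH
    have h1 : ∫ x in Metric.closedBall (0 : EuclideanSpace ℝ (Fin d)) (δ ε), Φ x
        = ∫ x, H x := (MeasureTheory.integral_indicator measurableSet_closedBall).symm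
    have h2 : ∫ x, H (Real.sqrt ε • x)
        = (Real.sqrt ε ^ d)⁻¹ • ∫ x, H x := by
      have := MeasureTheory.Measure.integral_comp_smul_of_nonneg
        (volume : Measure (EuclideanSpace ℝ (Fin d))) H (R := Real.sqrt ε)
        (hR := Real.sqrt_nonneg ε)
      rwa [finrank_euclideanSpace_fin] at this
    have h3 : ∀ y, H (Real.sqrt ε • y) = F ε y := by
      intro y
      rw [hH, hF]
      beta_reduce
      by_cases hy : ‖y‖ ≤ δ ε / Real.sqrt ε
      · have hmem : Real.sqrt ε • y ∈ Metric.closedBall (0 : EuclideanSpace ℝ (Fin d)) (δ ε) := by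
          rw [mem_closedBall_zero_iff, norm_smul, Real.norm_eq_abs, abs_of_pos hs]
          rw [le_div_iff₀ hs] at hy
          linarith [hy]
        rw [Set.indicator_of_mem hmem, Set.indicator_of_mem (by
          rwa [mem_closedBall_zero_iff])]
        rw [hΦ, hinn]
        beta_reduce
        have e1 : quadE A (Real.sqrt ε • y) = ε * quadE A y := by
          rw [quadE_smul, sq, hss]
        have e2 : -(quadE A (Real.sqrt ε • y)) / (2 * ε) = -(quadE A y) / 2 := by
          rw [e1]; field_simp
        have e3 : (δ ε)⁻¹ • (Real.sqrt ε • y) = (Real.sqrt ε / δ ε) • y := by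
          rw [smul_smul, div_eq_inv_mul]
        rw [e2, e3]
      · have hmem : Real.sqrt ε • y ∉ Metric.closedBall (0 : EuclideanSpace ℝ (Fin d)) (δ ε) := by
          rw [mem_closedBall_zero_iff, norm_smul, Real.norm_eq_abs, abs_of_pos hs]
          intro hcon
          apply hy
          rw [le_div_iff₀ hs]
          linarith
        rw [Set.indicator_of_notMem hmem, Set.indicator_of_notMem (by
          rwa [mem_closedBall_zero_iff])]
    have h4 : ∫ x, H x = (Real.sqrt ε ^ d) * ∫ y, F ε y := by
      simp_rw [← h3]
      rw [h2, smul_eq_mul, ← mul_assoc, mul_inv_cancel₀ (by positivity), one_mul]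
    rw [h1, h4, ← mul_assoc]
    congr 1
    -- prefactor computation
    have e5 : (2 * Real.pi * ε) ^ (-(d : ℝ) / 2)
        = (2 * Real.pi) ^ (-(d : ℝ) / 2) * ε ^ (-(d : ℝ) / 2) :=
      Real.mul_rpow hπ.le hε.le
    have e6 : (Real.sqrt ε) ^ d = ε ^ ((d : ℝ) / 2) := by
      rw [Real.sqrt_eq_rpow, ← Real.rpow_natCast (ε ^ ((1:ℝ)/2)) d,
        ← Real.rpow_mul hε.le]
      congr 1
      ring
    rw [e5, e6, mul_assoc, ← Real.rpow_add hε]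
    have hz : (-(d:ℝ)/2 + (d:ℝ)/2) = 0 := by ring
    rw [hz, Real.rpow_zero, mul_one]
  -- Step 2 : dominated convergence
  obtain ⟨Cg, hCg⟩ := (isCompact_closedBall (0 : EuclideanSpace ℝ (Fin d)) 1
    ).exists_bound_of_continuousOn hg.continuousOn
  obtain ⟨Cf, hCf⟩ := (isCompact_closedBall (0 : EuclideanSpace ℝ (Fin d)) 1
    ).exists_bound_of_continuousOn hf.continuousOn
  have hCg0 : 0 ≤ Cg := le_trans (norm_nonneg (g 0)) (hCg 0 (by simp))
  have hCf0 : 0 ≤ Cf := le_trans (norm_nonneg (f 0)) (hCf 0 (by simp))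
  have hTendInt : Tendsto (fun ε => ∫ y, F ε y) l
      (𝓝 (∫ y, Real.exp (-(quadE A y) / 2) * g 0 * f 0)) := by
    apply MeasureTheory.tendsto_integral_filter_of_dominated_convergence
      (fun y => Cg * Cf * Real.exp (-(quadE A y) / 2))
    · filter_upwards with ε
      apply AEStronglyMeasurable.indicator _ measurableSet_closedBall
      have : Continuous (inn ε) := by
        apply Continuous.mul
        apply Continuous.mul
        · exact Real.continuous_exp.comp ((continuous_quadE A).neg.div_const 2)
        · exact hg.comp (continuous_const_smul _)
        · exact hf.comp (continuous_const_smul _)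
      exact this.aestronglyMeasurable
    · filter_upwards [self_mem_nhdsWithin] with ε hε
      rw [Set.mem_Ioi] at hε
      obtain ⟨hδ0, hδ1⟩ := hδ ε hε
      have hs : 0 < Real.sqrt ε := Real.sqrt_pos.mpr hε
      filter_upwards with y
      rw [hF]
      beta_reduce
      by_cases hy : y ∈ Metric.closedBall (0 : EuclideanSpace ℝ (Fin d)) (δ ε / Real.sqrt ε)
      · rw [Set.indicator_of_mem hy, hinn]
        rw [mem_closedBall_zero_iff] at hy
        have hyg : ‖(Real.sqrt ε / δ ε) • y‖ ≤ 1 := by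
          rw [norm_smul, Real.norm_eq_abs, abs_of_pos (by positivity)]
          rw [le_div_iff₀ hs] at hy
          rw [div_mul_eq_mul_div, div_le_one hδ0]
          linarith [hy]
        have hyf : ‖Real.sqrt ε • y‖ ≤ 1 := by
          rw [norm_smul, Real.norm_eq_abs, abs_of_pos hs]
          rw [le_div_iff₀ hs] at hy
          linarith [hy]
        have b1 : ‖g ((Real.sqrt ε / δ ε) • y)‖ ≤ Cg := hCg _ (by rwa [mem_closedBall_zero_iff])
        have b2 : ‖f (Real.sqrt ε • y)‖ ≤ Cf := hCf _ (by rwa [mem_closedBall_zero_iff])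
        have hexp : (0:ℝ) < Real.exp (-(quadE A y) / 2) := Real.exp_pos _
        rw [Real.norm_eq_abs, abs_mul, abs_mul, abs_of_pos hexp]
        rw [Real.norm_eq_abs] at b1 b2
        calc Real.exp (-(quadE A y) / 2) * |g ((Real.sqrt ε / δ ε) • y)| * |f (Real.sqrt ε • y)|
            ≤ Real.exp (-(quadE A y) / 2) * Cg * Cf := by
              apply mul_le_mul _ b2 (abs_nonneg _) (by positivity)
              exact mul_le_mul_of_nonneg_left b1 hexp.le
          _ = Cg * Cf * Real.exp (-(quadE A y) / 2) := by ring
      · rw [Set.indicator_of_notMem hy]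
        simp only [norm_zero]
        positivity
    · exact ((gaussE_int A hA).1.const_mul _)
    · filter_upwards with y
      have hsqrt : Tendsto (fun ε => Real.sqrt ε) l (𝓝 0) := by
        have h1 : Tendsto Real.sqrt (𝓝 0) (𝓝 0) := by
          simpa using Real.continuous_sqrt.tendsto (0:ℝ)
        exact h1.mono_left nhdsWithin_le_nhds
      have h0g : Tendsto (fun ε => (Real.sqrt ε / δ ε) • y) l (𝓝 0) := by
        have := hlim.smul_const y
        simpa using this
      have h0f : Tendsto (fun ε => Real.sqrt ε • y) l (𝓝 0) := by
        have := hsqrt.smul_const y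
        simpa using this
      have hTinn : Tendsto (fun ε => inn ε y) l
          (𝓝 (Real.exp (-(quadE A y) / 2) * g 0 * f 0)) := by
        exact (tendsto_const_nhds.mul ((hg.tendsto 0).comp h0g)).mul ((hf.tendsto 0).comp h0f)
      apply hTinn.congr'
      have hev : ∀ᶠ ε in l, Real.sqrt ε / δ ε < (1 + ‖y‖)⁻¹ :=
        hlim.eventually (gt_mem_nhds (by positivity))
      filter_upwards [self_mem_nhdsWithin, hev] with ε hε h1
      rw [Set.mem_Ioi] at hε
      obtain ⟨hδ0, hδ1⟩ := hδ ε hε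
      have hs : 0 < Real.sqrt ε := Real.sqrt_pos.mpr hε
      have hmem : y ∈ Metric.closedBall (0 : EuclideanSpace ℝ (Fin d)) (δ ε / Real.sqrt ε) := by
        rw [mem_closedBall_zero_iff, le_div_iff₀ hs]
        have h2 : Real.sqrt ε < (1 + ‖y‖)⁻¹ * δ ε := (div_lt_iff₀ hδ0).mp h1
        have h3 : (0:ℝ) < 1 + ‖y‖ := by positivity
        have h4 := mul_lt_mul_of_pos_left h2 h3
        rw [← mul_assoc, mul_inv_cancel₀ h3.ne', one_mul] at h4
        nlinarith [Real.sqrt_nonneg ε, norm_nonneg y]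
      rw [hF]
      beta_reduce
      exact (Set.indicator_of_mem hmem _).symm
  -- Step 3 : value of the limit integral
  have hval : ∫ y, Real.exp (-(quadE A y) / 2) * g 0 * f 0
      = ((2 * Real.pi) ^ ((d : ℝ) / 2) / Real.sqrt A.det) * (g 0 * f 0) := by
    rw [MeasureTheory.integral_mul_const, MeasureTheory.integral_mul_const,
      (gaussE_int A hA).2]
    ring
  -- Step 4 : combine
  have hfinal := Tendsto.congr' (hEq.mono fun ε h => h.symm)
    (hTendInt.const_mul ((2 * Real.pi) ^ (-(d : ℝ) / 2)))
  rw [hval] at hfinal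
  have hfin : (2 * Real.pi) ^ (-(d:ℝ)/2) * ((2 * Real.pi) ^ ((d:ℝ)/2) / Real.sqrt A.det
      * (g 0 * f 0)) = g 0 * f 0 / Real.sqrt A.det := by
    rw [← mul_assoc, ← mul_div_assoc, ← Real.rpow_add hπ]
    have hz : (-(d:ℝ)/2 + (d:ℝ)/2) = 0 := by ring
    rw [hz, Real.rpow_zero]
    ring
  rw [hfin] at hfinal
  exact hfinal
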